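/- arXiv:2504.16229 — 5 statements merged into one kernel-verified Lean document; each statement's English description precedes it below -/
import Mathlib

section
/- Let d, k ≥ 1 be integers and z ≥ 1 a real. Let X ⊆ ℝ^d be a finite nonempty set and let C ⊆ ℝ^d be any nonempty finite set with |C| ≤ k. Then there exists a nonempty subset C' ⊆ X with |C'| ≤ k such that Cost(X, C') ≤ 2^{z+1} · Cost(X, C). In particular, the optimal (k,z)-medoids clustering cost min{Cost(X,C') : ∅ ≠ C' ⊆ X, |C'| ≤ k} is at most 2^{z+1} times the optimal (k,z)-clustering cost min{Cost(X,C) : ∅ ≠ C ⊆ ℝ^d, |C| ≤ k}. -/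
open scoped BigOperators

noncomputable def dSet {d : ℕ} (x : EuclideanSpace ℝ (Fin d))
    (C : Finset (EuclideanSpace ℝ (Fin d))) : ℝ :=
  sInf ((fun c => dist x c) '' (C : Set (EuclideanSpace ℝ (Fin d))))

noncomputable def kzCost {d : ℕ} (z : ℝ) (X C : Finset (EuclideanSpace ℝ (Fin d))) : ℝ :=
  ∑ x ∈ X, dSet x C ^ z

lemma dSet_le {d : ℕ} {x c : EuclideanSpace ℝ (Fin d)} {C : Finset (EuclideanSpace ℝ (Fin d))}
    (hc : c ∈ C) : dSet x C ≤ dist x c := by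
  apply csInf_le
  · exact (Set.Finite.image _ C.finite_toSet).bddBelow
  · exact ⟨c, hc, rfl⟩

lemma dSet_exists {d : ℕ} (x : EuclideanSpace ℝ (Fin d)) {C : Finset (EuclideanSpace ℝ (Fin d))}
    (hC : C.Nonempty) : ∃ c ∈ C, dSet x C = dist x c := by
  have hne : ((fun c => dist x c) '' (C : Set (EuclideanSpace ℝ (Fin d)))).Nonempty :=
    ⟨dist x hC.choose, hC.choose, hC.choose_spec, rfl⟩
  have := hne.csInf_mem (Set.Finite.image (fun c => dist x c) C.finite_toSet)
  obtain ⟨c, hc, hce⟩ := this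
  exact ⟨c, hc, hce.symm⟩

lemma dSet_nonneg {d : ℕ} (x : EuclideanSpace ℝ (Fin d)) {C : Finset (EuclideanSpace ℝ (Fin d))}
    (hC : C.Nonempty) : 0 ≤ dSet x C := by
  obtain ⟨c, _, h⟩ := dSet_exists x hC
  rw [h]; exact dist_nonneg

/-- For any nonempty set `C` of at most `k` centers in `ℝ^d`, there is a nonempty subset
`C' ⊆ X` with at most `k` points whose `(k,z)`-clustering cost on `X` is within a
`2^{z+1}` factor; in particular the optimal `(k,z)`-medoids cost is at most `2^{z+1}`
times the optimal `(k,z)`-clustering cost. -/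
theorem medoids_cost_vs_clustering_cost
    (d k : ℕ) (hd : 1 ≤ d) (hk : 1 ≤ k) (z : ℝ) (hz : 1 ≤ z)
    (X : Finset (EuclideanSpace ℝ (Fin d))) (hX : X.Nonempty)
    (C : Finset (EuclideanSpace ℝ (Fin d))) (hC : C.Nonempty) (hCk : C.card ≤ k) :
    ∃ C' : Finset (EuclideanSpace ℝ (Fin d)),
      C' ⊆ X ∧ C'.Nonempty ∧ C'.card ≤ k ∧
        kzCost z X C' ≤ 2 ^ (z + 1) * kzCost z X C := by
  classical
  -- for each c, a nearest point of X
  have hp : ∀ c : EuclideanSpace ℝ (Fin d), ∃ p ∈ X, ∀ y ∈ X, dist c p ≤ dist c y := by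
    intro c
    obtain ⟨p, hpX, hmin⟩ := X.exists_min_image (fun y => dist c y) hX
    exact ⟨p, hpX, hmin⟩
  choose p hpX hpmin using hp
  refine ⟨C.image p, ?_, hC.image p, le_trans (Finset.card_image_le) hCk, ?_⟩
  · intro y hy
    obtain ⟨c, _, rfl⟩ := Finset.mem_image.mp hy
    exact hpX c
  · unfold kzCost
    rw [Finset.mul_sum]
    apply Finset.sum_le_sum
    intro x hx
    obtain ⟨c, hcC, hce⟩ := dSet_exists x hC
    have h1 : dSet x (C.image p) ≤ 2 * dSet x C := by
      calc dSet x (C.image p) ≤ dist x (p c) :=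
            dSet_le (Finset.mem_image_of_mem p hcC)
        _ ≤ dist x c + dist c (p c) := dist_triangle x c (p c)
        _ ≤ dist x c + dist c x := by
            have := hpmin c x hx
            linarith
        _ = 2 * dSet x C := by rw [dist_comm c x, hce]; ring
    have h0 : 0 ≤ dSet x C := dSet_nonneg x hC
    have h0' : 0 ≤ dSet x (C.image p) := dSet_nonneg x (hC.image p)
    calc dSet x (C.image p) ^ z ≤ (2 * dSet x C) ^ z :=
          Real.rpow_le_rpow h0' h1 (by linarith)
      _ = 2 ^ z * dSet x C ^ z := Real.mul_rpow (by norm_num) h0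
      _ ≤ 2 ^ (z + 1) * dSet x C ^ z := by
          apply mul_le_mul_of_nonneg_right _ (Real.rpow_nonneg h0 z)
          exact Real.rpow_le_rpow_of_exponent_le (by norm_num) (by linarith)
end

section
/- Let d ≥ 1 be an integer and z ≥ 1 a real. Let C ⊆ ℝ^d be finite with |C| ≥ 2, let x ∈ ℝ^d, and let u ∈ C satisfy ‖u − x‖₂ = dist(x,C). Then for every c ∈ C \ {u}: min_{q ∈ (C ∪ {x}) \ {c}} ‖c − q‖₂^z ≤ min_{q ∈ C \ {c}} ‖c − q‖₂^z ≤ 2^{z+1} · min_{q ∈ (C ∪ {x}) \ {c}} ‖c − q‖₂^z. -/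
open scoped BigOperators Classical

/-- `min_{q ∈ Q} ‖c - q‖₂^z` over a finite set `Q`. -/
noncomputable def minPow {d : ℕ} (z : ℝ) (c : EuclideanSpace ℝ (Fin d))
    (Q : Finset (EuclideanSpace ℝ (Fin d))) : ℝ :=
  sInf ((fun q => dist c q ^ z) '' (Q : Set (EuclideanSpace ℝ (Fin d))))

lemma minPow_le {d : ℕ} (z : ℝ) (c q : EuclideanSpace ℝ (Fin d))
    (Q : Finset (EuclideanSpace ℝ (Fin d))) (hq : q ∈ Q) :
    minPow z c Q ≤ dist c q ^ z := by
  apply csInf_le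
  · exact (Q.finite_toSet.image _).bddBelow
  · exact Set.mem_image_of_mem _ hq

lemma le_minPow {d : ℕ} (z : ℝ) (c : EuclideanSpace ℝ (Fin d))
    (Q : Finset (EuclideanSpace ℝ (Fin d))) (hQ : Q.Nonempty) (b : ℝ)
    (hb : ∀ q ∈ Q, b ≤ dist c q ^ z) :
    b ≤ minPow z c Q := by
  apply le_csInf
  · obtain ⟨q, hq⟩ := hQ
    exact ⟨_, Set.mem_image_of_mem _ hq⟩
  · rintro _ ⟨q, hq, rfl⟩
    exact hb q hq

/-- If `u` is a nearest center of `C` to `x`, then for any other center `c ∈ C`,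
adjoining `x` to `C` changes `min_{q ≠ c} ‖c - q‖₂^z` by at most a `2^{z+1}` factor. -/
theorem nearest_center_update
    (d : ℕ) (hd : 1 ≤ d) (z : ℝ) (hz : 1 ≤ z)
    (C : Finset (EuclideanSpace ℝ (Fin d))) (hC : 2 ≤ C.card)
    (x u : EuclideanSpace ℝ (Fin d)) (hu : u ∈ C) (hux : dist x u = dSet x C) :
    ∀ c ∈ C, c ≠ u →
      minPow z c ((insert x C).erase c) ≤ minPow z c (C.erase c) ∧
        minPow z c (C.erase c) ≤ 2 ^ (z + 1) * minPow z c ((insert x C).erase c) := by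
  intro c hc hcu
  have hzpos : 0 < z := lt_of_lt_of_le one_pos hz
  have huQ : u ∈ (insert x C).erase c :=
    Finset.mem_erase.2 ⟨fun h => hcu h.symm, Finset.mem_insert_of_mem hu⟩
  have huE : u ∈ C.erase c := Finset.mem_erase.2 ⟨fun h => hcu h.symm, hu⟩
  have hQne : ((insert x C).erase c).Nonempty := ⟨u, huQ⟩
  -- minimizer of the bigger set
  obtain ⟨q0, hq0, hq0min⟩ := ((insert x C).erase c).exists_min_image (fun q => dist c q) hQne
  have hminQ : minPow z c ((insert x C).erase c) = dist c q0 ^ z := by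
    apply le_antisymm
    · exact minPow_le z c q0 _ hq0
    · apply le_minPow z c _ hQne
      intro q hq
      exact Real.rpow_le_rpow dist_nonneg (hq0min q hq) (le_of_lt hzpos)
  have h2z1 : (1 : ℝ) ≤ 2 ^ (z + 1) := by
    apply Real.one_le_rpow (by norm_num) (by linarith)
  have hQnonneg : 0 ≤ minPow z c ((insert x C).erase c) := by
    rw [hminQ]; exact Real.rpow_nonneg dist_nonneg z
  constructor
  · -- monotone: subset
    apply le_minPow z c _ ⟨u, huE⟩
    intro q hq
    apply minPow_le
    rcases Finset.mem_erase.1 hq with ⟨h1, h2⟩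
    exact Finset.mem_erase.2 ⟨h1, Finset.mem_insert_of_mem h2⟩
  · rcases Finset.mem_erase.1 hq0 with ⟨hq0c, hq0mem⟩
    rcases Finset.mem_insert.1 hq0mem with rfl | hq0C
    · -- q0 = x
      have hdx : dist q0 u ≤ dist q0 c := by
        rw [hux]
        apply csInf_le (C.finite_toSet.image _).bddBelow (Set.mem_image_of_mem _ hc)
      have hcu2 : dist c u ≤ 2 * dist c q0 := by
        have h1 := dist_triangle c q0 u
        rw [dist_comm q0 c] at hdx
        linarith
      calc minPow z c (C.erase c) ≤ dist c u ^ z := minPow_le z c u _ huE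
        _ ≤ (2 * dist c q0) ^ z :=
            Real.rpow_le_rpow dist_nonneg hcu2 (le_of_lt hzpos)
        _ = 2 ^ z * dist c q0 ^ z := Real.mul_rpow (by norm_num) dist_nonneg
        _ ≤ 2 ^ (z + 1) * dist c q0 ^ z := by
            apply mul_le_mul_of_nonneg_right _ (Real.rpow_nonneg dist_nonneg z)
            exact Real.rpow_le_rpow_of_exponent_le (by norm_num) (by linarith)
        _ = 2 ^ (z + 1) * minPow z c ((insert q0 C).erase c) := by rw [hminQ]
    · -- q0 ∈ C
      have : minPow z c (C.erase c) ≤ dist c q0 ^ z :=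
        minPow_le z c q0 _ (Finset.mem_erase.2 ⟨hq0c, hq0C⟩)
      calc minPow z c (C.erase c) ≤ minPow z c ((insert x C).erase c) := by
            rw [hminQ]; exact this
        _ ≤ 2 ^ (z + 1) * minPow z c ((insert x C).erase c) :=
            le_mul_of_one_le_left hQnonneg h2z1
end

section
/- Let d ≥ 1 be an integer, ℓ > 0, t > 2, and let S ⊆ ℝ^d be a finite set. Let the shift s be drawn uniformly at random from [0, ℓ)^d (coordinates independent and uniform). Then with probability at least 1 − 2d|S|/t, the following holds: every pair x, y ∈ S that lie in different cells of the axis-aligned grid with side length ℓ and shift s satisfies ‖x − y‖₂ ≥ ℓ/t. In particular, conditioned on the event that for every x ∈ S and every coordinate i the fractional part of (x_i − s_i)/ℓ lies in [1/t, 1 − 1/t] — an event of probability at least 1 − 2d|S|/t — any two points of S in different cells are at Euclidean distance at least ℓ/t. -/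
open MeasureTheory Set
open scoped ENNReal

/-- bad set in one coordinate -/
def rsgBad (ℓ t c : ℝ) : Set ℝ :=
  let m := ℓ * Int.fract (c / ℓ)
  let r := ℓ / t
  Set.Ico (max 0 (m - r)) (min ℓ (m + r)) ∪ Set.Ico 0 (m - ℓ + r) ∪ Set.Ioo (m + ℓ - r) ℓ

lemma rsgFract (ℓ : ℝ) (hℓ : 0 < ℓ) (c u : ℝ) :
    Int.fract ((c - u) / ℓ) = Int.fract (Int.fract (c / ℓ) - u / ℓ) := by
  have h : (c - u) / ℓ = (⌊c / ℓ⌋ : ℝ) + (Int.fract (c / ℓ) - u / ℓ) := by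
    rw [sub_div, Int.fract]; ring
  rw [h, Int.fract_intCast_add]

lemma rsgBad_mem (ℓ t c u : ℝ) (hℓ : 0 < ℓ) (ht : 2 < t) (hu : u ∈ Set.Ico (0:ℝ) ℓ)
    (hbad : ¬(1 / t ≤ Int.fract ((c - u) / ℓ) ∧ Int.fract ((c - u) / ℓ) ≤ 1 - 1 / t)) :
    u ∈ rsgBad ℓ t c := by
  have ht0 : (0:ℝ) < t := by linarith
  set a := Int.fract (c / ℓ) with ha
  have ha0 : 0 ≤ a := Int.fract_nonneg _
  have ha1 : a < 1 := Int.fract_lt_one _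
  set m := ℓ * a with hm
  set r := ℓ / t with hr
  have hr0 : 0 < r := div_pos hℓ ht0
  have hrℓ : r < ℓ / 2 := by
    rw [hr, div_lt_div_iff₀ ht0 two_pos]; nlinarith
  obtain ⟨hu0, huℓ⟩ := hu
  have hv1 : u / ℓ < 1 := (div_lt_one hℓ).2 huℓ
  have hv0 : 0 ≤ u / ℓ := div_nonneg hu0 hℓ.le
  have huv : u = ℓ * (u / ℓ) := by field_simp
  rw [rsgFract ℓ hℓ c u] at hbad
  push_neg at hbad
  -- key scaled inequality facts
  have hmul : ∀ p q : ℝ, p < q → ℓ * p < ℓ * q := fun p q h => by nlinarith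
  have hrt : r = ℓ * (1 / t) := by rw [hr]; ring
  rcases le_or_gt (u / ℓ) a with hc | hc
  · have hf : Int.fract (a - u / ℓ) = a - u / ℓ :=
      Int.fract_eq_self.2 ⟨by linarith, by linarith⟩
    rw [hf] at hbad
    rcases lt_or_ge (a - u / ℓ) (1 / t) with h1 | h1
    · -- u ∈ main interval
      left; left
      have h2 : m - r < u := by
        have := hmul _ _ h1; rw [← hrt] at this; nlinarith
      have h3 : u ≤ m := by nlinarith
      exact ⟨max_le hu0 (by linarith), lt_min (by linarith) (by linarith)⟩
    · -- fract > 1 - 1/t : u < m - ℓ + r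
      have h2 := hbad h1
      left; right
      refine ⟨hu0, ?_⟩
      have := hmul _ _ h2
      rw [mul_sub, mul_one, ← hrt] at this
      nlinarith
  · have hf : Int.fract (a - u / ℓ) = a - u / ℓ + 1 := by
      have : Int.fract (a - u / ℓ) = Int.fract (a - u / ℓ + 1) := (Int.fract_add_one _).symm
      rw [this, Int.fract_eq_self.2 ⟨by linarith, by linarith⟩]
    rw [hf] at hbad
    rcases lt_or_ge (a - u / ℓ + 1) (1 / t) with h1 | h1
    · -- u > m + ℓ - r
      right
      refine ⟨?_, huℓ⟩
      have := hmul _ _ h1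
      rw [mul_add, mul_one, ← hrt] at this
      nlinarith
    · -- fract > 1 - 1/t : u < m + r, u > m
      have h2 := hbad h1
      left; left
      have h3 : u < m + r := by
        have := hmul _ _ h2
        rw [mul_sub, mul_one, ← hrt, mul_add, mul_one] at this
        nlinarith
      refine ⟨max_le hu0 (by nlinarith), lt_min huℓ h3⟩

lemma rsgBad_vol (ℓ t c : ℝ) (hℓ : 0 < ℓ) (ht : 2 < t) :
    volume (rsgBad ℓ t c) ≤ ENNReal.ofReal (2 * ℓ / t) := by
  have ht0 : (0:ℝ) < t := by linarith
  set a := Int.fract (c / ℓ) with ha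
  have ha0 : 0 ≤ a := Int.fract_nonneg _
  have ha1 : a < 1 := Int.fract_lt_one _
  set m := ℓ * a with hm
  set r := ℓ / t with hr
  have hr0 : 0 < r := div_pos hℓ ht0
  have hrℓ : r < ℓ / 2 := by rw [hr, div_lt_div_iff₀ ht0 two_pos]; nlinarith
  have hm0 : 0 ≤ m := by positivity
  have hmℓ : m < ℓ := by nlinarith
  have h2r : 2 * ℓ / t = 2 * r := by rw [hr]; ring
  have hle : volume (rsgBad ℓ t c) ≤
      ENNReal.ofReal (min ℓ (m + r) - max 0 (m - r)) + ENNReal.ofReal (m - ℓ + r)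
        + ENNReal.ofReal (ℓ - (m + ℓ - r)) := by
    refine le_trans (measure_union_le _ _) ?_
    gcongr
    · refine le_trans (measure_union_le _ _) ?_
      gcongr
      · rw [Real.volume_Ico]
      · rw [Real.volume_Ico]; exact le_of_eq (congrArg ENNReal.ofReal (sub_zero _))
    · rw [Real.volume_Ioo]
  refine hle.trans ?_
  rw [h2r]
  rcases le_or_gt m r with h1 | h1
  · have e1 : min ℓ (m + r) = m + r := min_eq_right (by linarith)
    have e2 : max 0 (m - r) = 0 := max_eq_left (by linarith)
    have e3 : ENNReal.ofReal (m - ℓ + r) = 0 := by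
      rw [ENNReal.ofReal_eq_zero]; linarith
    rw [e1, e2, e3, add_zero, ← ENNReal.ofReal_add (by linarith) (by linarith)]
    exact ENNReal.ofReal_le_ofReal (by linarith)
  · rcases le_or_gt m (ℓ - r) with h2 | h2
    · have e1 : min ℓ (m + r) = m + r := min_eq_right (by linarith)
      have e2 : max 0 (m - r) = m - r := max_eq_right (by linarith)
      have e3 : ENNReal.ofReal (m - ℓ + r) = 0 := by
        rw [ENNReal.ofReal_eq_zero]; linarith
      have e4 : ENNReal.ofReal (ℓ - (m + ℓ - r)) = 0 := by
        rw [ENNReal.ofReal_eq_zero]; linarith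
      rw [e1, e2, e3, e4, add_zero, add_zero]
      exact ENNReal.ofReal_le_ofReal (by linarith)
    · have e1 : min ℓ (m + r) = ℓ := min_eq_left (by linarith)
      have e2 : max 0 (m - r) = m - r := max_eq_right (by linarith)
      have e4 : ENNReal.ofReal (ℓ - (m + ℓ - r)) = 0 := by
        rw [ENNReal.ofReal_eq_zero]; linarith
      rw [e1, e2, e4, add_zero, ← ENNReal.ofReal_add (by linarith) (by linarith)]
      exact ENNReal.ofReal_le_ofReal (by linarith)

lemma rsgCoord {d : ℕ} (x y : EuclideanSpace ℝ (Fin d)) (i : Fin d) :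
    |x i - y i| ≤ dist x y := by
  rw [EuclideanSpace.dist_eq, ← Real.sqrt_sq_eq_abs]
  apply Real.sqrt_le_sqrt
  have := Finset.single_le_sum (f := fun j => dist (x j) (y j) ^ 2)
    (fun j _ => sq_nonneg _) (Finset.mem_univ i)
  simpa [Real.dist_eq] using this

lemma rsgSep (t : ℝ) (ht : 2 < t) (a b : ℝ) (hne : ⌊a⌋ ≠ ⌊b⌋)
    (ha : 1 / t ≤ Int.fract a ∧ Int.fract a ≤ 1 - 1 / t)
    (hb : 1 / t ≤ Int.fract b ∧ Int.fract b ≤ 1 - 1 / t) :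
    1 / t ≤ |a - b| := by
  have ht0 : (0:ℝ) < t := by linarith
  have h1t : 0 < 1 / t := by positivity
  have key : ∀ p q : ℝ, ⌊p⌋ < ⌊q⌋ →
      (1 / t ≤ Int.fract p ∧ Int.fract p ≤ 1 - 1 / t) →
      (1 / t ≤ Int.fract q ∧ Int.fract q ≤ 1 - 1 / t) → 1 / t ≤ q - p := by
    intro p q hlt hp hq
    have hfl : (⌊p⌋ : ℝ) + 1 ≤ (⌊q⌋ : ℝ) := by exact_mod_cast Int.add_one_le_iff.2 hlt
    have hpe : p = ⌊p⌋ + Int.fract p := by rw [Int.fract]; ring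
    have hqe : q = ⌊q⌋ + Int.fract q := by rw [Int.fract]; ring
    linarith [hp.2, hq.1]
  rcases lt_or_gt_of_ne hne with h | h
  · have := key a b h ha hb
    calc 1 / t ≤ b - a := this
    _ ≤ |a - b| := by rw [abs_sub_comm]; exact le_abs_self _
  · have := key b a h hb ha
    calc 1 / t ≤ a - b := this
    _ ≤ |a - b| := le_abs_self _

/-- For a uniformly random shift `s ∈ [0,ℓ)^d`, with probability at least
`1 − 2d|S|/t`, every pair of points of `S` lying in different cells of the axis-aligned
grid with side length `ℓ` and shift `s` is at Euclidean distance at least `ℓ/t`.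
The underlying event (all fractional parts `(x_i − s_i)/ℓ` lying in `[1/t, 1 − 1/t]`)
also has probability at least `1 − 2d|S|/t` and deterministically implies the
separation property. -/
theorem random_shift_grid_separation
    (d : ℕ) (hd : 1 ≤ d) (ℓ t : ℝ) (hℓ : 0 < ℓ) (ht : 2 < t)
    (S : Finset (EuclideanSpace ℝ (Fin d))) :
    (1 - ENNReal.ofReal (2 * d * S.card / t)) *
        volume {s : EuclideanSpace ℝ (Fin d) | ∀ i : Fin d, s i ∈ Set.Ico (0 : ℝ) ℓ} ≤
      volume {s : EuclideanSpace ℝ (Fin d) |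
        (∀ i : Fin d, s i ∈ Set.Ico (0 : ℝ) ℓ) ∧
        ∀ x ∈ S, ∀ y ∈ S,
          (∃ i : Fin d, ⌊(x i - s i) / ℓ⌋ ≠ ⌊(y i - s i) / ℓ⌋) → ℓ / t ≤ dist x y} ∧
    (1 - ENNReal.ofReal (2 * d * S.card / t)) *
        volume {s : EuclideanSpace ℝ (Fin d) | ∀ i : Fin d, s i ∈ Set.Ico (0 : ℝ) ℓ} ≤
      volume {s : EuclideanSpace ℝ (Fin d) |
        (∀ i : Fin d, s i ∈ Set.Ico (0 : ℝ) ℓ) ∧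
        ∀ x ∈ S, ∀ i : Fin d,
          1 / t ≤ Int.fract ((x i - s i) / ℓ) ∧ Int.fract ((x i - s i) / ℓ) ≤ 1 - 1 / t} ∧
    (∀ s : EuclideanSpace ℝ (Fin d),
      (∀ x ∈ S, ∀ i : Fin d,
        1 / t ≤ Int.fract ((x i - s i) / ℓ) ∧ Int.fract ((x i - s i) / ℓ) ≤ 1 - 1 / t) →
      ∀ x ∈ S, ∀ y ∈ S,
        (∃ i : Fin d, ⌊(x i - s i) / ℓ⌋ ≠ ⌊(y i - s i) / ℓ⌋) → ℓ / t ≤ dist x y) := by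
  classical
  have ht0 : (0 : ℝ) < t := by linarith
  -- deterministic implication
  have hdet : ∀ s : EuclideanSpace ℝ (Fin d),
      (∀ x ∈ S, ∀ i : Fin d,
        1 / t ≤ Int.fract ((x i - s i) / ℓ) ∧ Int.fract ((x i - s i) / ℓ) ≤ 1 - 1 / t) →
      ∀ x ∈ S, ∀ y ∈ S,
        (∃ i : Fin d, ⌊(x i - s i) / ℓ⌋ ≠ ⌊(y i - s i) / ℓ⌋) → ℓ / t ≤ dist x y := by
    intro s hfr x hx y hy hex
    obtain ⟨i, hi⟩ := hex
    have h := rsgSep t ht _ _ hi (hfr x hx i) (hfr y hy i)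
    have heq : (x i - s i) / ℓ - (y i - s i) / ℓ = (x i - y i) / ℓ := by ring
    rw [heq, abs_div, abs_of_pos hℓ] at h
    have h2 : ℓ / t ≤ |x i - y i| := by
      rw [div_le_div_iff₀ ht0 hℓ] at h
      rw [div_le_iff₀ ht0]; linarith
    exact h2.trans (rsgCoord x y i)
  -- transfer to pi space
  have e := (EuclideanSpace.volume_preserving_symm_measurableEquiv_toLp (Fin d)).symm
  have hbox : volume {s : EuclideanSpace ℝ (Fin d) | ∀ i : Fin d, s i ∈ Set.Ico (0 : ℝ) ℓ}
      = volume {f : Fin d → ℝ | ∀ i : Fin d, f i ∈ Set.Ico (0 : ℝ) ℓ} := by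
    rw [← e.measure_preimage_equiv]; rfl
  have hgood : volume {s : EuclideanSpace ℝ (Fin d) |
        (∀ i : Fin d, s i ∈ Set.Ico (0 : ℝ) ℓ) ∧
        ∀ x ∈ S, ∀ i : Fin d,
          1 / t ≤ Int.fract ((x i - s i) / ℓ) ∧ Int.fract ((x i - s i) / ℓ) ≤ 1 - 1 / t}
      = volume {f : Fin d → ℝ |
        (∀ i : Fin d, f i ∈ Set.Ico (0 : ℝ) ℓ) ∧
        ∀ x ∈ S, ∀ i : Fin d,
          1 / t ≤ Int.fract ((x i - f i) / ℓ) ∧ Int.fract ((x i - f i) / ℓ) ≤ 1 - 1 / t} := by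
    rw [← e.measure_preimage_equiv]; rfl
  set V := ENNReal.ofReal ℓ ^ d with hV
  set cst := ENNReal.ofReal (2 * d * S.card / t) with hcst
  have hVbox : volume {f : Fin d → ℝ | ∀ i : Fin d, f i ∈ Set.Ico (0 : ℝ) ℓ} = V := by
    have hpi : {f : Fin d → ℝ | ∀ i : Fin d, f i ∈ Set.Ico (0 : ℝ) ℓ}
        = Set.pi Set.univ (fun _ => Set.Ico (0 : ℝ) ℓ) := by ext f; simp [Set.mem_pi]
    rw [hpi, volume_pi_pi]; simp [Real.volume_Ico]; rfl
  -- bad boxes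
  set P : EuclideanSpace ℝ (Fin d) → Fin d → Set (Fin d → ℝ) := fun x i =>
    Set.pi Set.univ (fun j => if j = i then rsgBad ℓ t (x i) else Set.Ico (0 : ℝ) ℓ) with hP
  have hcover : {f : Fin d → ℝ | ∀ i : Fin d, f i ∈ Set.Ico (0 : ℝ) ℓ} ⊆
      {f : Fin d → ℝ |
        (∀ i : Fin d, f i ∈ Set.Ico (0 : ℝ) ℓ) ∧
        ∀ x ∈ S, ∀ i : Fin d,
          1 / t ≤ Int.fract ((x i - f i) / ℓ) ∧ Int.fract ((x i - f i) / ℓ) ≤ 1 - 1 / t}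
      ∪ ⋃ x ∈ S, ⋃ i : Fin d, P x i := by
    intro f hf
    by_cases hg : ∀ x ∈ S, ∀ i : Fin d,
        1 / t ≤ Int.fract ((x i - f i) / ℓ) ∧ Int.fract ((x i - f i) / ℓ) ≤ 1 - 1 / t
    · exact Or.inl ⟨hf, hg⟩
    · push_neg at hg
      obtain ⟨x, hx, i, hi⟩ := hg
      refine Or.inr (Set.mem_biUnion hx (Set.mem_iUnion.2 ⟨i, ?_⟩))
      intro j _
      by_cases hj : j = i
      · subst hj
        simp only [if_pos rfl]
        refine rsgBad_mem ℓ t (x j) (f j) hℓ ht (hf j) ?_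
        intro hc
        exact absurd hc.2 (not_le.2 (hi hc.1))
      · simp only [if_neg hj]; exact hf j
  have hPvol : ∀ (x : EuclideanSpace ℝ (Fin d)) (i : Fin d),
      volume (P x i) ≤ ENNReal.ofReal (2 * ℓ / t) * ENNReal.ofReal ℓ ^ (d - 1) := by
    intro x i
    rw [hP]
    rw [volume_pi_pi]
    have hite : ∀ j : Fin d, volume (if j = i then rsgBad ℓ t (x i) else Set.Ico (0 : ℝ) ℓ)
        = if j = i then volume (rsgBad ℓ t (x i)) else ENNReal.ofReal ℓ := by
      intro j
      split
      · rfl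
      · simp [Real.volume_Ico]
    rw [Finset.prod_congr rfl (fun j _ => hite j),
        ← Finset.mul_prod_erase Finset.univ _ (Finset.mem_univ i)]
    have hprod : (∏ j ∈ Finset.univ.erase i,
        if j = i then volume (rsgBad ℓ t (x i)) else ENNReal.ofReal ℓ)
        = ENNReal.ofReal ℓ ^ (d - 1) := by
      rw [Finset.prod_congr rfl (fun j hj => if_neg (Finset.ne_of_mem_erase hj)),
          Finset.prod_const, Finset.card_erase_of_mem (Finset.mem_univ i)]
      simp
    rw [if_pos rfl, hprod]
    exact mul_le_mul_left (rsgBad_vol ℓ t (x i) hℓ ht) _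
  have hsum : volume (⋃ x ∈ S, ⋃ i : Fin d, P x i) ≤ cst * V := by
    refine le_trans (measure_biUnion_finset_le S _) ?_
    have hx1 : ∀ x ∈ S, volume (⋃ i : Fin d, P x i)
        ≤ (d : ℝ≥0∞) * (ENNReal.ofReal (2 * ℓ / t) * ENNReal.ofReal ℓ ^ (d - 1)) := by
      intro x _
      refine le_trans (measure_iUnion_fintype_le _ _) ?_
      refine le_trans (Finset.sum_le_sum fun i _ => hPvol x i) ?_
      rw [Finset.sum_const, Finset.card_univ, Fintype.card_fin, nsmul_eq_mul]
    refine le_trans (Finset.sum_le_sum hx1) ?_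
    rw [Finset.sum_const, nsmul_eq_mul]
    have harith : (S.card : ℝ≥0∞) *
        ((d : ℝ≥0∞) * (ENNReal.ofReal (2 * ℓ / t) * ENNReal.ofReal ℓ ^ (d - 1)))
        = cst * V := by
      rw [hcst, hV]
      calc (S.card : ℝ≥0∞) *
          ((d : ℝ≥0∞) * (ENNReal.ofReal (2 * ℓ / t) * ENNReal.ofReal ℓ ^ (d - 1)))
          = ENNReal.ofReal ((S.card : ℝ) * ((d : ℝ) * (2 * ℓ / t))) *
            ENNReal.ofReal ℓ ^ (d - 1) := by
            rw [ENNReal.ofReal_mul (by positivity), ENNReal.ofReal_mul (by positivity),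
              ENNReal.ofReal_natCast, ENNReal.ofReal_natCast]
            ring
        _ = ENNReal.ofReal (2 * d * S.card / t * ℓ) * ENNReal.ofReal ℓ ^ (d - 1) := by
            congr 1
            rw [ENNReal.ofReal_eq_ofReal_iff (by positivity) (by positivity)]
            ring
        _ = ENNReal.ofReal (2 * d * S.card / t) * ENNReal.ofReal ℓ ^ d := by
            rw [ENNReal.ofReal_mul (by positivity), mul_assoc, ← pow_succ',
              Nat.sub_add_cancel hd]
    exact le_of_eq harith
  -- combine
  have hVfin : V ≠ ⊤ := by
    rw [hV]; exact ENNReal.pow_ne_top ENNReal.ofReal_ne_top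
  have hmain : (1 - cst) * V ≤ volume {f : Fin d → ℝ |
        (∀ i : Fin d, f i ∈ Set.Ico (0 : ℝ) ℓ) ∧
        ∀ x ∈ S, ∀ i : Fin d,
          1 / t ≤ Int.fract ((x i - f i) / ℓ) ∧ Int.fract ((x i - f i) / ℓ) ≤ 1 - 1 / t} := by
    rw [ENNReal.sub_mul (fun _ _ => hVfin), one_mul, tsub_le_iff_right]
    calc V = volume {f : Fin d → ℝ | ∀ i : Fin d, f i ∈ Set.Ico (0 : ℝ) ℓ} := hVbox.symm
      _ ≤ volume ({f : Fin d → ℝ |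
            (∀ i : Fin d, f i ∈ Set.Ico (0 : ℝ) ℓ) ∧
            ∀ x ∈ S, ∀ i : Fin d,
              1 / t ≤ Int.fract ((x i - f i) / ℓ) ∧ Int.fract ((x i - f i) / ℓ) ≤ 1 - 1 / t}
          ∪ ⋃ x ∈ S, ⋃ i : Fin d, P x i) := measure_mono hcover
      _ ≤ _ + volume (⋃ x ∈ S, ⋃ i : Fin d, P x i) := measure_union_le _ _
      _ ≤ _ + cst * V := add_le_add_right hsum _
  have h2 : (1 - cst) *
      volume {s : EuclideanSpace ℝ (Fin d) | ∀ i : Fin d, s i ∈ Set.Ico (0 : ℝ) ℓ} ≤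
      volume {s : EuclideanSpace ℝ (Fin d) |
        (∀ i : Fin d, s i ∈ Set.Ico (0 : ℝ) ℓ) ∧
        ∀ x ∈ S, ∀ i : Fin d,
          1 / t ≤ Int.fract ((x i - s i) / ℓ) ∧ Int.fract ((x i - s i) / ℓ) ≤ 1 - 1 / t} := by
    rw [hbox, hVbox, hgood]
    exact hmain
  refine ⟨?_, h2, hdet⟩
  refine le_trans h2 (measure_mono ?_)
  intro s hs
  exact ⟨hs.1, hdet s hs.2⟩
end

section
/- Let n, d ≥ 1 be integers and M ≥ 1. Let A be an n×d matrix with integer entries satisfying |A_{ij}| ≤ M for all i, j. Then every nonzero eigenvalue λ of the d×d matrix AᵀA satisfies (d·n·M²)^{−d} ≤ λ ≤ d·n·M². Consequently, every nonzero singular value σ of A satisfies |log σ| = O(d · log(ndM)). -/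
open Matrix

open Matrix Polynomial Finset

lemma eval_charpoly' {d : ℕ} (B : Matrix (Fin d) (Fin d) ℝ) (x : ℝ) :
    B.charpoly.eval x = (x • (1 : Matrix (Fin d) (Fin d) ℝ) - B).det := by
  rw [Matrix.charpoly, eval_det, matPolyEquiv_charmatrix]
  simp [smul_one_eq_diagonal]

lemma quadform_bound {n d : ℕ} (M : ℝ) (hM : 1 ≤ M) (A : Matrix (Fin n) (Fin d) ℝ)
    (hA : ∀ i j, |A i j| ≤ M) {v : Fin d → ℝ} (hv : v ≠ 0) {t : ℝ}
    (h : (Aᵀ * A).mulVec v = t • v) : 0 ≤ t ∧ t ≤ (d : ℝ) * n * M ^ 2 := by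
  have hvv : 0 < v ⬝ᵥ v := by
    obtain ⟨j, hj⟩ := Function.ne_iff.mp hv
    unfold dotProduct
    apply Finset.sum_pos' (fun i _ => mul_self_nonneg _) ⟨j, Finset.mem_univ j, mul_self_pos.mpr hj⟩
  have key : t * (v ⬝ᵥ v) = (A.mulVec v) ⬝ᵥ (A.mulVec v) := by
    have h2 : v ⬝ᵥ ((Aᵀ * A).mulVec v) = v ⬝ᵥ (t • v) := by rw [h]
    rw [← Matrix.mulVec_mulVec, Matrix.dotProduct_mulVec, Matrix.vecMul_transpose,
      dotProduct_smul, smul_eq_mul] at h2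
    exact h2.symm
  have hAvnn : 0 ≤ (A.mulVec v) ⬝ᵥ (A.mulVec v) :=
    Finset.sum_nonneg fun i _ => mul_self_nonneg _
  have ht : 0 ≤ t := by nlinarith
  refine ⟨ht, ?_⟩
  have hub : (A.mulVec v) ⬝ᵥ (A.mulVec v) ≤ ((d : ℝ) * n * M ^ 2) * (v ⬝ᵥ v) := by
    have hrow : ∀ i : Fin n, (A.mulVec v i) * (A.mulVec v i) ≤ ((d : ℝ) * M ^ 2) * (v ⬝ᵥ v) := by
      intro i
      have hcs := Finset.sum_mul_sq_le_sq_mul_sq Finset.univ (fun j => A i j) v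
      have h1 : ∑ j, (A i j) ^ 2 ≤ (d : ℝ) * M ^ 2 := by
        calc ∑ j, (A i j) ^ 2 ≤ ∑ _j : Fin d, M ^ 2 := by
              apply Finset.sum_le_sum; intro j _
              have := hA i j
              nlinarith [abs_nonneg (A i j), neg_abs_le (A i j), le_abs_self (A i j)]
          _ = (d : ℝ) * M ^ 2 := by simp [mul_comm]
      have hAv : A.mulVec v i = ∑ j, A i j * v j := rfl
      have hvv2 : v ⬝ᵥ v = ∑ j, (v j) ^ 2 := by unfold dotProduct; simp [sq]
      rw [hAv, hvv2, ← sq]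
      calc (∑ j, A i j * v j) ^ 2 ≤ (∑ j, (A i j) ^ 2) * ∑ j, (v j) ^ 2 := hcs
        _ ≤ ((d : ℝ) * M ^ 2) * ∑ j, (v j) ^ 2 := by
            apply mul_le_mul_of_nonneg_right h1
            exact Finset.sum_nonneg fun j _ => sq_nonneg _
    calc (A.mulVec v) ⬝ᵥ (A.mulVec v) = ∑ i, (A.mulVec v i) * (A.mulVec v i) := rfl
      _ ≤ ∑ _i : Fin n, ((d : ℝ) * M ^ 2) * (v ⬝ᵥ v) := Finset.sum_le_sum fun i _ => hrow i
      _ = ((d : ℝ) * n * M ^ 2) * (v ⬝ᵥ v) := by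
          simp [Finset.sum_const]; ring
  have := key.trans_le hub
  exact le_of_mul_le_mul_right (by linarith) hvv

lemma eigen_bound {n d : ℕ} (hn : 1 ≤ n) (hd : 1 ≤ d) (M : ℝ) (hM : 1 ≤ M)
    (A : Matrix (Fin n) (Fin d) ℝ) (hint : ∀ i j, ∃ m : ℤ, A i j = (m : ℝ))
    (hA : ∀ i j, |A i j| ≤ M) (lam : ℝ) (hlam : lam ≠ 0)
    (hex : ∃ v : Fin d → ℝ, v ≠ 0 ∧ (Aᵀ * A).mulVec v = lam • v) :
    (((d : ℝ) * n * M ^ 2) ^ d)⁻¹ ≤ lam ∧ lam ≤ (d : ℝ) * n * M ^ 2 := by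
  classical
  obtain ⟨v, hv, hvec⟩ := hex
  set K : ℝ := (d : ℝ) * n * M ^ 2 with hK
  have hd1 : (1:ℝ) ≤ (d:ℝ) := by exact_mod_cast hd
  have hn1 : (1:ℝ) ≤ (n:ℝ) := by exact_mod_cast hn
  have hM2 : (1:ℝ) ≤ M ^ 2 := by nlinarith
  have hdn : (1:ℝ) ≤ (d:ℝ) * n := by nlinarith
  have hK1 : 1 ≤ K := by rw [hK]; nlinarith
  obtain ⟨hlam0, hlamK⟩ := quadform_bound M hM A hA hv hvec
  have hlampos : 0 < lam := lt_of_le_of_ne hlam0 (Ne.symm hlam)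
  refine ⟨?_, hlamK⟩
  set B : Matrix (Fin d) (Fin d) ℝ := Aᵀ * A with hBdef
  have hB : B.IsHermitian := by simpa only [conjTranspose_eq_transpose_of_trivial] using isHermitian_conjTranspose_mul_self A
  set μ : Fin d → ℝ := hB.eigenvalues with hμ
  have hμmem : ∀ i, 0 ≤ μ i ∧ μ i ≤ K := by
    intro i
    have hne : (⇑(hB.eigenvectorBasis i) : Fin d → ℝ) ≠ 0 := by
      have h0 := hB.eigenvectorBasis.orthonormal.ne_zero i
      intro hc
      exact h0 (by ext j; exact congrFun hc j)
    exact quadform_bound M hM A hA hne (hB.mulVec_eigenvectorBasis i)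
  -- determinant factorization
  have hfact : ∀ x : ℝ, (x • (1 : Matrix (Fin d) (Fin d) ℝ) - B).det = ∏ i, (x - μ i) := by
    intro x
    set U : Matrix (Fin d) (Fin d) ℝ := (hB.eigenvectorUnitary : Matrix (Fin d) (Fin d) ℝ) with hU
    have hU1 : U * star U = 1 := (Matrix.mem_unitaryGroup_iff).mp hB.eigenvectorUnitary.2
    have hdiag : diagonal ((RCLike.ofReal : ℝ → ℝ) ∘ μ) = diagonal μ := by
      congr 1
    have hx : x • (1 : Matrix (Fin d) (Fin d) ℝ) - B
        = U * (x • 1 - diagonal μ) * star U := by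
      rw [mul_sub, sub_mul]
      congr 1
      · rw [mul_smul_comm, mul_one, smul_mul_assoc, hU1]
      · rw [← hdiag]
        exact hB.spectral_theorem
    rw [hx, det_mul, det_mul]
    have hC : (x • (1:Matrix (Fin d) (Fin d) ℝ) - diagonal μ).det = ∏ i, (x - μ i) := by
      rw [smul_one_eq_diagonal, diagonal_sub, det_diagonal]
    have hdet1 : U.det * (star U).det = 1 := by rw [← det_mul, hU1, det_one]
    rw [hC]
    calc U.det * (∏ i, (x - μ i)) * (star U).det
        = (U.det * (star U).det) * ∏ i, (x - μ i) := by ring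
      _ = ∏ i, (x - μ i) := by rw [hdet1, one_mul]
  have hdet : (lam • (1 : Matrix (Fin d) (Fin d) ℝ) - B).det = 0 := by
    rw [← Matrix.exists_mulVec_eq_zero_iff]
    refine ⟨v, hv, ?_⟩
    rw [Matrix.sub_mulVec, Matrix.smul_mulVec, Matrix.one_mulVec, hvec, sub_self]
  obtain ⟨i0, hi0⟩ : ∃ i, μ i = lam := by
    have h0 : ∏ i, (lam - μ i) = 0 := by rw [← hfact lam]; exact hdet
    obtain ⟨i, _, hi⟩ := Finset.prod_eq_zero_iff.mp h0
    exact ⟨i, by linarith [sub_eq_zero.mp hi]⟩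
  -- the characteristic polynomial has integer coefficients
  set p : Polynomial ℝ := ∏ i, (Polynomial.X - Polynomial.C (μ i)) with hp
  choose f hf using hint
  set Bz : Matrix (Fin d) (Fin d) ℤ := (Matrix.of f)ᵀ * (Matrix.of f) with hBz
  have hBmap : B = Bz.map (Int.cast : ℤ → ℝ) := by
    ext i j
    simp only [hBdef, hBz, Matrix.mul_apply, Matrix.map_apply, Matrix.transpose_apply,
      Matrix.of_apply, hf]
    push_cast
    rfl
  have hpchar : p = B.charpoly := by
    apply Polynomial.funext
    intro x
    rw [eval_charpoly', hfact x, hp, Polynomial.eval_prod]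
    simp
  have hcoeff : ∀ k, ∃ z : ℤ, p.coeff k = (z : ℝ) := by
    intro k
    refine ⟨Bz.charpoly.coeff k, ?_⟩
    have : B.charpoly = Bz.charpoly.map (Int.castRingHom ℝ) := by
      rw [hBmap]
      exact (Matrix.charpoly_map Bz (Int.castRingHom ℝ))
    rw [hpchar, this, Polynomial.coeff_map]
    rfl
  -- product of nonzero eigenvalues is at least 1
  set S : Finset (Fin d) := Finset.univ.filter (fun i => ¬ μ i = 0) with hS
  set m : ℕ := (Finset.univ.filter (fun i => μ i = 0)).card with hm
  set q : Polynomial ℝ := ∏ i ∈ S, (Polynomial.X - Polynomial.C (μ i)) with hq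
  have hsplit : p = Polynomial.X ^ m * q := by
    rw [hp, ← Finset.prod_filter_mul_prod_filter_not Finset.univ (fun i => μ i = 0)]
    congr 1
    calc ∏ i ∈ Finset.univ.filter (fun i => μ i = 0), (Polynomial.X - Polynomial.C (μ i))
        = ∏ _i ∈ Finset.univ.filter (fun i => μ i = 0), (Polynomial.X : Polynomial ℝ) :=
          Finset.prod_congr rfl (fun i hi => by
            simp [(Finset.mem_filter.mp hi).2])
      _ = Polynomial.X ^ m := Finset.prod_const _
  have hc0 : p.coeff m = ∏ i ∈ S, (- μ i) := by
    have : (Polynomial.X ^ m * q).coeff (0 + m) = q.coeff 0 := Polynomial.coeff_X_pow_mul q m 0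
    rw [hsplit]
    rw [zero_add] at this
    rw [this, Polynomial.coeff_zero_eq_eval_zero, hq, Polynomial.eval_prod]
    simp
  have hSpos : ∀ i ∈ S, 0 < μ i := fun i hi =>
    lt_of_le_of_ne (hμmem i).1 (Ne.symm (Finset.mem_filter.mp hi).2)
  have h1le : (1:ℝ) ≤ ∏ i ∈ S, μ i := by
    obtain ⟨z, hz⟩ := hcoeff m
    have habs : |(z:ℝ)| = ∏ i ∈ S, μ i := by
      rw [← hz, hc0, Finset.abs_prod]
      exact Finset.prod_congr rfl (fun i hi => by rw [abs_neg, abs_of_pos (hSpos i hi)])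
    have hprodne : ∏ i ∈ S, (- μ i) ≠ 0 :=
      Finset.prod_ne_zero_iff.mpr (fun i hi => neg_ne_zero.mpr (Finset.mem_filter.mp hi).2)
    have hzne : z ≠ 0 := by
      intro hc
      apply hprodne
      rw [← hc0, hz, hc, Int.cast_zero]
    have hz1 : (1:ℝ) ≤ |(z:ℝ)| := by exact_mod_cast Int.one_le_abs hzne
    linarith [habs ▸ hz1]
  have hi0S : i0 ∈ S := Finset.mem_filter.mpr ⟨Finset.mem_univ _, by rw [hi0]; exact hlam⟩
  have hprod_erase : ∏ i ∈ S, μ i = lam * ∏ i ∈ S.erase i0, μ i := by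
    rw [← Finset.mul_prod_erase S μ hi0S, hi0]
  have herase_le : ∏ i ∈ S.erase i0, μ i ≤ K ^ d := by
    calc ∏ i ∈ S.erase i0, μ i ≤ ∏ _i ∈ S.erase i0, K :=
          Finset.prod_le_prod (fun i _ => (hμmem i).1) (fun i _ => (hμmem i).2)
      _ = K ^ (S.erase i0).card := Finset.prod_const _
      _ ≤ K ^ d := by
          apply pow_le_pow_right₀ hK1
          calc (S.erase i0).card ≤ S.card := Finset.card_le_card (Finset.erase_subset _ _)
            _ ≤ Fintype.card (Fin d) := Finset.card_le_univ S
            _ = d := Fintype.card_fin d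
  have hfin : 1 ≤ lam * K ^ d := by
    calc (1:ℝ) ≤ ∏ i ∈ S, μ i := h1le
      _ = lam * ∏ i ∈ S.erase i0, μ i := hprod_erase
      _ ≤ lam * K ^ d := mul_le_mul_of_nonneg_left herase_le hlampos.le
  have hKd : (0:ℝ) < K ^ d := by positivity
  rw [inv_eq_one_div, div_le_iff₀ hKd]
  linarith


/-- For an `n × d` matrix `A` with integer entries bounded in magnitude by `M ≥ 1`,
every nonzero eigenvalue `λ` of `AᵀA` satisfies `(dnM²)^{-d} ≤ λ ≤ dnM²`, and
consequently every nonzero singular value `σ` of `A` (i.e. `σ > 0` with `σ²` an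
eigenvalue of `AᵀA`) satisfies `|log σ| = O(d·log(ndM))`. -/
theorem singular_value_log_bound :
    ∃ c : ℝ, 0 < c ∧
      ∀ (n d : ℕ), 1 ≤ n → 1 ≤ d → ∀ M : ℝ, 1 ≤ M →
        ∀ A : Matrix (Fin n) (Fin d) ℝ,
          (∀ i j, ∃ m : ℤ, A i j = (m : ℝ)) → (∀ i j, |A i j| ≤ M) →
          (∀ lam : ℝ, lam ≠ 0 →
            (∃ v : Fin d → ℝ, v ≠ 0 ∧ (Aᵀ * A).mulVec v = lam • v) →
            (((d : ℝ) * n * M ^ 2) ^ d)⁻¹ ≤ lam ∧ lam ≤ (d : ℝ) * n * M ^ 2) ∧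
          (∀ σ : ℝ, 0 < σ →
            (∃ v : Fin d → ℝ, v ≠ 0 ∧ (Aᵀ * A).mulVec v = (σ ^ 2) • v) →
            |Real.log σ| ≤ c * d * Real.log ((n : ℝ) * d * M)) := by
  refine ⟨1, one_pos, fun n d hn hd M hM A hint hA => ?_⟩
  have hd1 : (1:ℝ) ≤ (d:ℝ) := by exact_mod_cast hd
  have hn1 : (1:ℝ) ≤ (n:ℝ) := by exact_mod_cast hn
  refine ⟨fun lam hlam hex => eigen_bound hn hd M hM A hint hA lam hlam hex, ?_⟩
  intro σ hσ hex
  set K : ℝ := (d : ℝ) * n * M ^ 2 with hK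
  have hM2 : (1:ℝ) ≤ M ^ 2 := by nlinarith
  have hdn : (1:ℝ) ≤ (d:ℝ) * n := by nlinarith
  have hK1 : 1 ≤ K := by rw [hK]; nlinarith
  obtain ⟨hlb, hub⟩ := eigen_bound hn hd M hM A hint hA (σ ^ 2) (by positivity) hex
  set L : ℝ := Real.log ((n : ℝ) * d * M) with hL
  have hndM1 : (1:ℝ) ≤ (n:ℝ) * d * M := by nlinarith
  have hL0 : 0 ≤ L := Real.log_nonneg hndM1
  have hKle : K ≤ ((n : ℝ) * d * M) ^ 2 := by rw [hK]; nlinarith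
  have hlogK : Real.log K ≤ 2 * L := by
    calc Real.log K ≤ Real.log (((n : ℝ) * d * M) ^ 2) :=
          Real.log_le_log (by linarith) hKle
      _ = 2 * L := by rw [Real.log_pow]; push_cast; ring
  have hlogK0 : 0 ≤ Real.log K := Real.log_nonneg hK1
  have hup : Real.log σ ≤ L := by
    have h1 : Real.log (σ ^ 2) ≤ Real.log K := Real.log_le_log (by positivity) hub
    rw [Real.log_pow] at h1
    push_cast at h1
    linarith
  have hlow : -((d:ℝ) * L) ≤ Real.log σ := by
    have h1 : Real.log ((K ^ d)⁻¹) ≤ Real.log (σ ^ 2) :=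
      Real.log_le_log (by positivity) hlb
    rw [Real.log_inv, Real.log_pow, Real.log_pow] at h1
    push_cast at h1
    nlinarith [hlogK, hL0, hd1]
  rw [one_mul]
  rw [abs_le]
  constructor
  · linarith
  · calc Real.log σ ≤ L := hup
      _ ≤ (d:ℝ) * L := by nlinarith
end

section
/- For every ε ∈ (0, 1/2), every real p ≥ 1, every integer d ≥ 1, and every D ≥ 1, there exists ε'₀ > 0 depending only on ε, p, d, and D (and not on n) such that the following holds for every integer n ≥ 1 and all 0 < ε' ≤ ε'₀. Let B ∈ ℝ^{n×d} satisfy (1/D)·‖y‖_p ≤ ‖By‖_p ≤ D·‖y‖_p for all y ∈ ℝ^d, and let B' ∈ ℝ^{n×d} satisfy |B'_{tj} − B_{tj}| ≤ ε'·|B_{tj}| for all t ∈ {1,…,n} and j ∈ {1,…,d}. Then for all y ∈ ℝ^d: (1 − ε)·‖By‖_p^p ≤ ‖B'y‖_p^p ≤ (1 + ε)·‖By‖_p^p. -/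
open scoped BigOperators

/-- The `L_p` norm of a vector `v ∈ ℝ^n`: `(Σ_i |v_i|^p)^{1/p}`. -/
noncomputable def lpNorm {n : ℕ} (p : ℝ) (v : Fin n → ℝ) : ℝ :=
  (∑ i, |v i| ^ p) ^ (1 / p)

private lemma lpNorm_nonneg {n : ℕ} (p : ℝ) (v : Fin n → ℝ) : 0 ≤ lpNorm p v :=
  Real.rpow_nonneg (Finset.sum_nonneg fun i _ => Real.rpow_nonneg (abs_nonneg _) p) _

private lemma lpNorm_rpow {n : ℕ} {p : ℝ} (hp : 0 < p) (v : Fin n → ℝ) :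
    lpNorm p v ^ p = ∑ i, |v i| ^ p := by
  have hS : 0 ≤ ∑ i, |v i| ^ p :=
    Finset.sum_nonneg fun i _ => Real.rpow_nonneg (abs_nonneg _) p
  rw [lpNorm, ← Real.rpow_mul hS, one_div, inv_mul_cancel₀ hp.ne', Real.rpow_one]

private lemma lpNorm_triangle' {n : ℕ} {p : ℝ} (hp : 1 ≤ p) (w u v : Fin n → ℝ)
    (h : ∀ i, w i = u i + v i) : lpNorm p w ≤ lpNorm p u + lpNorm p v := by
  have hp0 : (0 : ℝ) < p := lt_of_lt_of_le one_pos hp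
  have h1 : lpNorm p w ≤ (∑ i, (|u i| + |v i|) ^ p) ^ (1 / p) := by
    refine Real.rpow_le_rpow
      (Finset.sum_nonneg fun i _ => Real.rpow_nonneg (abs_nonneg _) p)
      (Finset.sum_le_sum fun i _ => Real.rpow_le_rpow (abs_nonneg _)
        (by rw [h i]; exact abs_add_le _ _) hp0.le)
      (by positivity)
  refine h1.trans ?_
  simp only [lpNorm]
  exact Real.Lp_add_le_of_nonneg (s := Finset.univ) hp
    (fun i _ => abs_nonneg _) (fun i _ => abs_nonneg _)

/-- If `B` is well-conditioned (`(1/D)·‖y‖_p ≤ ‖By‖_p ≤ D·‖y‖_p`) and `B'` agrees with `B`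
entrywise up to relative error `ε'`, then `‖B'y‖_p^p = (1 ± ε)·‖By‖_p^p` for all `y`,
provided `ε'` is small enough depending only on `ε`, `p`, `d`, `D` (and not on `n`). -/
theorem entrywise_rounding_preserves_lp
    (ε : ℝ) (hε0 : 0 < ε) (hε : ε < 1 / 2) (p : ℝ) (hp : 1 ≤ p)
    (d : ℕ) (hd : 1 ≤ d) (D : ℝ) (hD : 1 ≤ D) :
    ∃ ε'₀ : ℝ, 0 < ε'₀ ∧
      ∀ (n : ℕ), 1 ≤ n → ∀ ε' : ℝ, 0 < ε' → ε' ≤ ε'₀ →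
        ∀ B B' : Matrix (Fin n) (Fin d) ℝ,
          (∀ y : Fin d → ℝ,
            (1 / D) * lpNorm p y ≤ lpNorm p (B.mulVec y) ∧
              lpNorm p (B.mulVec y) ≤ D * lpNorm p y) →
          (∀ t j, |B' t j - B t j| ≤ ε' * |B t j|) →
          ∀ y : Fin d → ℝ,
            (1 - ε) * lpNorm p (B.mulVec y) ^ p ≤ lpNorm p (B'.mulVec y) ^ p ∧
              lpNorm p (B'.mulVec y) ^ p ≤ (1 + ε) * lpNorm p (B.mulVec y) ^ p := by
  have hp0 : (0 : ℝ) < p := lt_of_lt_of_le one_pos hp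
  have hD0 : (0 : ℝ) < D := lt_of_lt_of_le one_pos hD
  have hd1 : (1 : ℝ) ≤ (d : ℝ) := by exact_mod_cast hd
  have hd0 : (0 : ℝ) < (d : ℝ) := lt_of_lt_of_le one_pos hd1
  have h1ε : (0 : ℝ) < 1 - ε := by linarith
  have hA : (1 : ℝ) < (1 + ε) ^ (1 / p) := by
    rw [Real.one_lt_rpow_iff_of_pos (by linarith)]
    exact Or.inl ⟨by linarith, by positivity⟩
  have hBlt : (1 - ε) ^ (1 / p) < 1 :=
    Real.rpow_lt_one h1ε.le (by linarith) (by positivity)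
  set δ : ℝ := min ((1 + ε) ^ (1 / p) - 1) (1 - (1 - ε) ^ (1 / p)) with hδdef
  have hδpos : 0 < δ := lt_min (by linarith) (by linarith)
  have hdD : (0 : ℝ) < (d : ℝ) * D ^ 2 := by positivity
  refine ⟨δ / ((d : ℝ) * D ^ 2), div_pos hδpos hdD, ?_⟩
  intro n hn ε' hε'0 hε'le B B' hBcond hB' y
  set u := B.mulVec y with hu
  set M := lpNorm p u with hM
  have hM0 : 0 ≤ M := lpNorm_nonneg p u
  -- `‖y‖_p ≤ D * M`
  have hy : lpNorm p y ≤ D * M := by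
    have h2 := mul_le_mul_of_nonneg_left (hBcond y).1 hD0.le
    rw [← mul_assoc, mul_one_div_cancel hD0.ne', one_mul] at h2
    exact h2
  -- column bound
  have hcol : ∀ j, (∑ t, |B t j| ^ p) ≤ D ^ p := by
    intro j
    have h1 : lpNorm p (B.mulVec (Pi.single j 1)) ≤ D * lpNorm p (Pi.single j (1 : ℝ)) :=
      (hBcond _).2
    have hsingle : lpNorm p (Pi.single j (1 : ℝ)) = 1 := by
      rw [lpNorm]
      have hs : ∑ i : Fin d, |Pi.single j (1 : ℝ) i| ^ p = (1 : ℝ) := by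
        rw [Finset.sum_eq_single j]
        · simp
        · intro i _ hij
          rw [Pi.single_eq_of_ne hij]
          simp [Real.zero_rpow hp0.ne']
        · simp
      rw [hs, Real.one_rpow]
    have hmv : B.mulVec (Pi.single j 1) = fun t => B t j := by
      rw [Matrix.mulVec_single]; simp; rfl
    rw [hmv, hsingle, mul_one] at h1
    calc (∑ t, |B t j| ^ p) = lpNorm p (fun t => B t j) ^ p := (lpNorm_rpow hp0 _).symm
      _ ≤ D ^ p := Real.rpow_le_rpow (lpNorm_nonneg _ _) h1 hp0.le
  -- the error vector
  set E : Fin n → ℝ := fun t => B'.mulVec y t - u t with hE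
  have hEbound : ∀ t, |E t| ≤ ε' * ∑ j, |B t j| * |y j| := by
    intro t
    have h1 : E t = ∑ j, (B' t j - B t j) * y j := by
      simp only [hE, hu, Matrix.mulVec, dotProduct, sub_mul,
        Finset.sum_sub_distrib]
    rw [h1]
    calc |∑ j, (B' t j - B t j) * y j| ≤ ∑ j, |(B' t j - B t j) * y j| :=
          Finset.abs_sum_le_sum_abs _ _
      _ = ∑ j, |B' t j - B t j| * |y j| := by simp [abs_mul]
      _ ≤ ∑ j, ε' * |B t j| * |y j| :=
          Finset.sum_le_sum fun j _ => mul_le_mul_of_nonneg_right (hB' t j) (abs_nonneg _)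
      _ = ε' * ∑ j, |B t j| * |y j| := by
          rw [Finset.mul_sum]
          exact Finset.sum_congr rfl fun j _ => by ring
  -- the `p`-th power sum of the error
  have hEsum : (∑ t, |E t| ^ p) ≤ (ε' * ((d : ℝ) * D ^ 2) * M) ^ p := by
    have key : ∀ t, |E t| ^ p ≤
        ε' ^ p * ((d : ℝ) ^ (p - 1) * ∑ j, (|B t j| * |y j|) ^ p) := by
      intro t
      have h1 := Real.rpow_le_rpow (abs_nonneg _) (hEbound t) hp0.le
      have h2 : (ε' * ∑ j, |B t j| * |y j|) ^ p
          = ε' ^ p * (∑ j, |B t j| * |y j|) ^ p :=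
        Real.mul_rpow hε'0.le (Finset.sum_nonneg fun j _ => by positivity)
      have h3 := Real.rpow_sum_le_const_mul_sum_rpow_of_nonneg (s := Finset.univ)
        (f := fun j => |B t j| * |y j|) hp (fun j _ => by positivity)
      simp only [Finset.card_univ, Fintype.card_fin] at h3
      calc |E t| ^ p ≤ ε' ^ p * (∑ j, |B t j| * |y j|) ^ p := by rw [← h2]; exact h1
        _ ≤ _ := mul_le_mul_of_nonneg_left h3 (by positivity)
    have hswap : (∑ t, ∑ j, (|B t j| * |y j|) ^ p) = ∑ j, |y j| ^ p * ∑ t, |B t j| ^ p := by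
      rw [Finset.sum_comm]
      refine Finset.sum_congr rfl fun j _ => ?_
      rw [Finset.mul_sum]
      refine Finset.sum_congr rfl fun t _ => ?_
      rw [Real.mul_rpow (abs_nonneg _) (abs_nonneg _)]; ring
    have hinner : (∑ j, |y j| ^ p * ∑ t, |B t j| ^ p) ≤ D ^ p * ∑ j, |y j| ^ p := by
      calc (∑ j, |y j| ^ p * ∑ t, |B t j| ^ p) ≤ ∑ j, |y j| ^ p * D ^ p :=
            Finset.sum_le_sum fun j _ =>
              mul_le_mul_of_nonneg_left (hcol j) (Real.rpow_nonneg (abs_nonneg _) _)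
        _ = D ^ p * ∑ j, |y j| ^ p := by rw [← Finset.sum_mul]; ring
    have hyp : (∑ j, |y j| ^ p) ≤ (D * M) ^ p := by
      have h := Real.rpow_le_rpow (lpNorm_nonneg p y) hy hp0.le
      rwa [lpNorm_rpow hp0] at h
    have hdpow : (d : ℝ) ^ (p - 1) ≤ (d : ℝ) ^ p :=
      Real.rpow_le_rpow_of_exponent_le hd1 (by linarith)
    have final : ε' ^ p * ((d : ℝ) ^ (p - 1) * (D ^ p * (D * M) ^ p))
        ≤ (ε' * ((d : ℝ) * D ^ 2) * M) ^ p := by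
      have e1 : D ^ p * (D * M) ^ p = (D ^ 2 * M) ^ p := by
        rw [← Real.mul_rpow hD0.le (by positivity)]
        congr 1; ring
      rw [e1]
      calc ε' ^ p * ((d : ℝ) ^ (p - 1) * (D ^ 2 * M) ^ p)
          ≤ ε' ^ p * ((d : ℝ) ^ p * (D ^ 2 * M) ^ p) := by
            refine mul_le_mul_of_nonneg_left
              (mul_le_mul_of_nonneg_right hdpow (by positivity)) (by positivity)
        _ = (ε' * ((d : ℝ) * D ^ 2) * M) ^ p := by
            rw [← Real.mul_rpow (by positivity) (by positivity),
              ← Real.mul_rpow hε'0.le (by positivity)]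
            congr 1; ring
    calc (∑ t, |E t| ^ p)
        ≤ ∑ t, ε' ^ p * ((d : ℝ) ^ (p - 1) * ∑ j, (|B t j| * |y j|) ^ p) :=
          Finset.sum_le_sum fun t _ => key t
      _ = ε' ^ p * ((d : ℝ) ^ (p - 1) * ∑ t, ∑ j, (|B t j| * |y j|) ^ p) := by
          rw [← Finset.mul_sum, ← Finset.mul_sum]
      _ ≤ ε' ^ p * ((d : ℝ) ^ (p - 1) * (D ^ p * (D * M) ^ p)) := by
          refine mul_le_mul_of_nonneg_left (mul_le_mul_of_nonneg_left ?_ (by positivity))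
            (by positivity)
          rw [hswap]
          exact hinner.trans (mul_le_mul_of_nonneg_left hyp (by positivity))
      _ ≤ _ := final
  -- `‖E‖_p ≤ δ * M`
  have hElp : lpNorm p E ≤ δ * M := by
    have hC0 : (0 : ℝ) ≤ ε' * ((d : ℝ) * D ^ 2) * M := by positivity
    have h1 : lpNorm p E ≤ ε' * ((d : ℝ) * D ^ 2) * M := by
      rw [lpNorm]
      have h := Real.rpow_le_rpow (Finset.sum_nonneg fun t _ => by positivity) hEsum
        (by positivity : (0 : ℝ) ≤ 1 / p)
      rwa [← Real.rpow_mul hC0, mul_one_div, div_self hp0.ne', Real.rpow_one] at h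
    have h2 : ε' * ((d : ℝ) * D ^ 2) ≤ δ := by
      calc ε' * ((d : ℝ) * D ^ 2) ≤ (δ / ((d : ℝ) * D ^ 2)) * ((d : ℝ) * D ^ 2) :=
            mul_le_mul_of_nonneg_right hε'le hdD.le
        _ = δ := div_mul_cancel₀ _ hdD.ne'
    exact h1.trans (mul_le_mul_of_nonneg_right h2 hM0)
  have hnegE : lpNorm p (fun t => -E t) = lpNorm p E := by
    simp [lpNorm, abs_neg]
  -- triangle inequalities
  have hN0 : 0 ≤ lpNorm p (B'.mulVec y) := lpNorm_nonneg _ _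
  have hup : lpNorm p (B'.mulVec y) ≤ (1 + δ) * M := by
    have h := lpNorm_triangle' hp (B'.mulVec y) u E
      (fun t => by simp only [hE]; ring)
    have e : (1 + δ) * M = M + δ * M := by ring
    rw [e]
    linarith
  have hlo : (1 - δ) * M ≤ lpNorm p (B'.mulVec y) := by
    have h := lpNorm_triangle' hp u (B'.mulVec y) (fun t => -E t)
      (fun t => by simp only [hE]; ring)
    rw [hnegE] at h
    have e : (1 - δ) * M = M - δ * M := by ring
    rw [e]
    linarith
  have hMp0 : (0 : ℝ) ≤ M ^ p := Real.rpow_nonneg hM0 p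
  constructor
  · -- lower bound
    have hδle : δ ≤ 1 - (1 - ε) ^ (1 / p) := min_le_right _ _
    have h1δ : (1 - ε) ^ (1 / p) ≤ 1 - δ := by linarith
    have h1δ0 : (0 : ℝ) ≤ 1 - δ := le_trans (Real.rpow_nonneg h1ε.le _) h1δ
    have step := Real.rpow_le_rpow (by positivity) hlo hp0.le
    rw [Real.mul_rpow h1δ0 hM0] at step
    have e : ((1 - ε) ^ (1 / p)) ^ p = 1 - ε := by
      rw [← Real.rpow_mul h1ε.le, one_div, inv_mul_cancel₀ hp0.ne', Real.rpow_one]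
    have step2 : (1 - ε) * M ^ p ≤ (1 - δ) ^ p * M ^ p := by
      have h := Real.rpow_le_rpow (Real.rpow_nonneg h1ε.le _) h1δ hp0.le
      rw [e] at h
      exact mul_le_mul_of_nonneg_right h hMp0
    exact step2.trans step
  · -- upper bound
    have hδle : δ ≤ (1 + ε) ^ (1 / p) - 1 := min_le_left _ _
    have h1δ : 1 + δ ≤ (1 + ε) ^ (1 / p) := by linarith
    have step := Real.rpow_le_rpow hN0 hup hp0.le
    rw [Real.mul_rpow (by linarith) hM0] at step
    have e : ((1 + ε) ^ (1 / p)) ^ p = 1 + ε := by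
      rw [← Real.rpow_mul (by linarith), one_div, inv_mul_cancel₀ hp0.ne', Real.rpow_one]
    have step2 : (1 + δ) ^ p * M ^ p ≤ (1 + ε) * M ^ p := by
      have h := Real.rpow_le_rpow (by linarith) h1δ hp0.le
      rw [e] at h
      exact mul_le_mul_of_nonneg_right h hMp0
    exact step.trans step2
end
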